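/- arXiv:2102.02099 — 2 statements merged into one kernel-verified Lean document; each statement's English description precedes it below -/
import Mathlib

section
/- Let σx², σv², σw² > 0, A ∈ ℝ, and set K = (Aσw² + σv²)σx² / ((A²σw² + σv²)σx² + σw²σv²), α = Aσw²/(Aσw² + σv²) (assume Aσw² + σv² ≠ 0). Then substituting t = αK and u = (1−α)K into J(t,u) = (At+u−1)²σx² + t²σv² + u²σw² yields exactly J = σx²σw²σv² / ((A²σw²+σv²)σx² + σw²σv²). -/
theorem optimal_decoder_attains (A sx sv sw : ℝ) (hsx : 0 < sx) (hsv : 0 < sv) (hsw : 0 < sw)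
    (hA : A * sw + sv ≠ 0) :
    let K := (A * sw + sv) * sx / ((A ^ 2 * sw + sv) * sx + sw * sv)
    let α := A * sw / (A * sw + sv)
    (A * (α * K) + (1 - α) * K - 1) ^ 2 * sx + (α * K) ^ 2 * sv + ((1 - α) * K) ^ 2 * sw
      = sx * sw * sv / ((A ^ 2 * sw + sv) * sx + sw * sv) := by
  have hD : (A ^ 2 * sw + sv) * sx + sw * sv ≠ 0 := by positivity
  field_simp
  ring
end

section
/- Let Σ, σv², σw², θ > 0. Define g(μ) = Σσw²σv²/((μσw² + σv²)Σ + σw²σv²) + θμΣ for μ ≥ 0. If θ ≥ Σ/(σv²(Σ/σw² + 1)²) then g is minimized over [0,∞) at μ* = 0; if θ < Σ/(σv²(Σ/σw² + 1)²) then g is minimized at μ* = σv²/√(θΣσv²) − (σv²/Σ)(Σ/σw² + 1) > 0. -/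
theorem stagewise_encoder_optimum (Sig sv sw θ : ℝ) (hSig : 0 < Sig) (hsv : 0 < sv) (hsw : 0 < sw)
    (hθ : 0 < θ) :
    (θ ≥ Sig / (sv * (Sig / sw + 1) ^ 2) →
      ∀ μ : ℝ, 0 ≤ μ →
        Sig * sw * sv / ((0 * sw + sv) * Sig + sw * sv) + θ * 0 * Sig
          ≤ Sig * sw * sv / ((μ * sw + sv) * Sig + sw * sv) + θ * μ * Sig) ∧
    (θ < Sig / (sv * (Sig / sw + 1) ^ 2) →
      0 < sv / Real.sqrt (θ * Sig * sv) - (sv / Sig) * (Sig / sw + 1) ∧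
      ∀ μ : ℝ, 0 ≤ μ →
        Sig * sw * sv /
            (((sv / Real.sqrt (θ * Sig * sv) - (sv / Sig) * (Sig / sw + 1)) * sw + sv) * Sig + sw * sv)
            + θ * (sv / Real.sqrt (θ * Sig * sv) - (sv / Sig) * (Sig / sw + 1)) * Sig
          ≤ Sig * sw * sv / ((μ * sw + sv) * Sig + sw * sv) + θ * μ * Sig) := by
  have hP : 0 < sv * (Sig / sw + 1) ^ 2 := by positivity
  constructor
  · intro hθ' μ hμ
    have h1 : Sig ≤ θ * (sv * (Sig / sw + 1) ^ 2) := (div_le_iff₀ hP).mp hθ'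
    have h2 : Sig * sw ^ 2 ≤ θ * sv * (Sig + sw) ^ 2 := by
      field_simp at h1
      nlinarith [h1]
    have hDa : (0:ℝ) < (0 * sw + sv) * Sig + sw * sv := by nlinarith
    have hDμ : (0:ℝ) < (μ * sw + sv) * Sig + sw * sv := by
      nlinarith [mul_nonneg (mul_nonneg hμ hsw.le) hSig.le, mul_pos hsv hSig, mul_pos hsw hsv]
    rw [div_add' _ _ _ hDa.ne', div_add' _ _ _ hDμ.ne', div_le_div_iff₀ hDa hDμ]
    have e2 : Sig * sw ^ 2 * sv ≤ θ * ((0 * sw + sv) * Sig + sw * sv) * ((μ * sw + sv) * Sig + sw * sv) := by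
      nlinarith [mul_le_mul_of_nonneg_right h2 hsv.le,
        mul_nonneg (mul_nonneg (mul_nonneg (mul_nonneg hθ.le hDa.le) hμ) hsw.le) hSig.le]
    have diff_eq : (Sig * sw * sv + θ * μ * Sig * ((μ * sw + sv) * Sig + sw * sv)) *
          ((0 * sw + sv) * Sig + sw * sv) -
        (Sig * sw * sv + θ * 0 * Sig * ((0 * sw + sv) * Sig + sw * sv)) *
          ((μ * sw + sv) * Sig + sw * sv)
        = μ * Sig * (θ * ((0 * sw + sv) * Sig + sw * sv) * ((μ * sw + sv) * Sig + sw * sv)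
            - Sig * sw ^ 2 * sv) := by ring
    have e3 : 0 ≤ μ * Sig * (θ * ((0 * sw + sv) * Sig + sw * sv) * ((μ * sw + sv) * Sig + sw * sv)
        - Sig * sw ^ 2 * sv) := mul_nonneg (mul_nonneg hμ hSig.le) (by linarith)
    linarith [diff_eq, e3]
  · intro hθ'
    set r := Real.sqrt (θ * Sig * sv) with hr_def
    have hr : 0 < r := Real.sqrt_pos.mpr (by positivity)
    have hr2 : r ^ 2 = θ * Sig * sv := Real.sq_sqrt (by positivity)
    have h1 : θ * (sv * (Sig / sw + 1) ^ 2) < Sig := (lt_div_iff₀ hP).mp hθ'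
    have h2 : θ * sv * (Sig + sw) ^ 2 < Sig * sw ^ 2 := by
      field_simp at h1
      nlinarith [h1]
    have hsq : (r * (Sig + sw)) ^ 2 < (Sig * sw) ^ 2 := by
      rw [mul_pow, mul_pow, hr2]
      nlinarith [mul_lt_mul_of_pos_left h2 hSig]
    have h3 : r * (Sig + sw) < Sig * sw :=
      lt_of_pow_lt_pow_left₀ 2 (mul_pos hSig hsw).le hsq
    set a := sv / r - sv / Sig * (Sig / sw + 1) with ha_def
    have ha : 0 < a := by
      rw [ha_def, sub_pos]
      have hrw : sv / Sig * (Sig / sw + 1) = sv * (Sig + sw) / (Sig * sw) := by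
        field_simp
        try ring
      rw [hrw, div_lt_div_iff₀ (by positivity) hr]
      nlinarith [mul_lt_mul_of_pos_left h3 hsv]
    refine ⟨ha, ?_⟩
    intro μ hμ
    have hDa_eq : (a * sw + sv) * Sig + sw * sv = sv * sw * Sig / r := by
      rw [ha_def]
      field_simp
      ring
    have hDa : (0:ℝ) < (a * sw + sv) * Sig + sw * sv := by
      rw [hDa_eq]; positivity
    have hDμ : (0:ℝ) < (μ * sw + sv) * Sig + sw * sv := by
      nlinarith [mul_nonneg (mul_nonneg hμ hsw.le) hSig.le, mul_pos hsv hSig, mul_pos hsw hsv]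
    have hkey : θ * ((a * sw + sv) * Sig + sw * sv) ^ 2 = Sig * sw ^ 2 * sv := by
      rw [hDa_eq, div_pow, hr2]
      field_simp
      try ring
    rw [div_add' _ _ _ hDa.ne', div_add' _ _ _ hDμ.ne', div_le_div_iff₀ hDa hDμ]
    have diff_eq : (Sig * sw * sv + θ * μ * Sig * ((μ * sw + sv) * Sig + sw * sv)) *
          ((a * sw + sv) * Sig + sw * sv) -
        (Sig * sw * sv + θ * a * Sig * ((a * sw + sv) * Sig + sw * sv)) *
          ((μ * sw + sv) * Sig + sw * sv)
        = (μ - a) ^ 2 * sw * Sig ^ 2 * θ * ((a * sw + sv) * Sig + sw * sv) := by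
      linear_combination (μ - a) * Sig * hkey
    have e3 : 0 ≤ (μ - a) ^ 2 * sw * Sig ^ 2 * θ * ((a * sw + sv) * Sig + sw * sv) :=
      mul_nonneg (by positivity) hDa.le
    linarith [diff_eq, e3]
end
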